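/- Let Φ be a quadratic form on ℝ^{n×m}. Then Φ(x yᵀ) = 0 for all x ∈ ℝⁿ, y ∈ ℝᵐ if and only if Φ is a linear combination of 2×2 minors: there exist real coefficients c_{ikjl}, indexed by pairs 1 ≤ i < k ≤ n and 1 ≤ j < l ≤ m, such that Φ(Z) = Σ_{i<k, j<l} c_{ikjl} · (Z_{ij} Z_{kl} − Z_{il} Z_{kj}) for all n×m real matrices Z. -/

import Mathlib

open Matrix

/-- The standard inner product `⟨A, B⟩ = trace (A Bᵀ)` on matrices. -/
def matInner {n m : ℕ} (A B : Matrix (Fin n) (Fin m) ℝ) : ℝ := (A * Bᵀ).trace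

/-- A quadratic form on `n × m` real matrices: `Φ Z = ⟨Z, C Z⟩` for a symmetric
linear map `C` on matrices. -/
def IsMatQuadraticForm (n m : ℕ) (Φ : Matrix (Fin n) (Fin m) ℝ → ℝ) : Prop :=
  ∃ C : Matrix (Fin n) (Fin m) ℝ →ₗ[ℝ] Matrix (Fin n) (Fin m) ℝ,
    (∀ A B, matInner A (C B) = matInner (C A) B) ∧ ∀ Z, Φ Z = matInner Z (C Z)

lemma matInner_eq {n m : ℕ} (A B : Matrix (Fin n) (Fin m) ℝ) :
    matInner A B = ∑ i, ∑ j, A i j * B i j := by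
  simp [matInner, Matrix.trace, Matrix.diag, Matrix.mul_apply, Matrix.transpose_apply]

lemma matInner_comm {n m : ℕ} (A B : Matrix (Fin n) (Fin m) ℝ) :
    matInner A B = matInner B A := by
  simp [matInner_eq, mul_comm]

lemma matInner_add_left {n m : ℕ} (A B X : Matrix (Fin n) (Fin m) ℝ) :
    matInner (A + B) X = matInner A X + matInner B X := by
  simp [matInner_eq, Matrix.add_apply, add_mul, Finset.sum_add_distrib]

lemma matInner_add_right {n m : ℕ} (X A B : Matrix (Fin n) (Fin m) ℝ) :
    matInner X (A + B) = matInner X A + matInner X B := by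
  simp [matInner_eq, Matrix.add_apply, mul_add, Finset.sum_add_distrib]

lemma matInner_std {n m : ℕ} (i : Fin n) (j : Fin m) (X : Matrix (Fin n) (Fin m) ℝ) :
    matInner (Matrix.single i j 1) X = X i j := by
  rw [matInner_eq]
  have h : ∀ a, ∑ b, Matrix.single i j (1:ℝ) a b * X a b = if i = a then X a j else 0 := by
    intro a
    by_cases h : i = a
    · subst h
      simp [Matrix.single, Matrix.of_apply, ite_mul]
    · simp [Matrix.single, Matrix.of_apply, h]
  simp [h]

lemma vecMulVec_single {n m : ℕ} (i : Fin n) (j : Fin m) :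
    vecMulVec (Pi.single i (1:ℝ)) (Pi.single j (1:ℝ)) = Matrix.single i j 1 := by
  ext a b
  by_cases ha : i = a <;> by_cases hb : j = b <;>
    simp [vecMulVec_apply, Matrix.single, Matrix.of_apply, Pi.single_apply, ha, hb, eq_comm]

lemma add_vecMulVec' {n m : ℕ} (x x' : Fin n → ℝ) (y : Fin m → ℝ) :
    vecMulVec (x + x') y = vecMulVec x y + vecMulVec x' y := by
  ext a b; simp [vecMulVec_apply, add_mul]

lemma vecMulVec_add' {n m : ℕ} (x : Fin n → ℝ) (y y' : Fin m → ℝ) :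
    vecMulVec x (y + y') = vecMulVec x y + vecMulVec x y' := by
  ext a b; simp [vecMulVec_apply, mul_add]

/-- Splitting a double sum with vanishing diagonal using the part below the diagonal. -/
lemma sum_split {p : ℕ} (h : Fin p → Fin p → ℝ) (h0 : ∀ i, h i i = 0) :
    ∑ i, ∑ k, h i k = ∑ i, ∑ k, if i < k then h i k + h k i else 0 := by
  have key : ∀ i k, h i k = (if i < k then h i k else 0) + (if k < i then h i k else 0) := by
    intro i k
    rcases lt_trichotomy i k with hc | hc | hc
    · simp [hc, asymm hc]
    · subst hc; simp [h0]
    · simp [hc, asymm hc, not_lt_of_gt hc]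
  calc ∑ i, ∑ k, h i k
      = ∑ i, ∑ k, ((if i < k then h i k else 0) + (if k < i then h i k else 0)) :=
        Finset.sum_congr rfl fun i _ => Finset.sum_congr rfl fun k _ => key i k
    _ = (∑ i, ∑ k, if i < k then h i k else 0) + ∑ i, ∑ k, if k < i then h i k else 0 := by
        simp [Finset.sum_add_distrib]
    _ = (∑ i, ∑ k, if i < k then h i k else 0) + ∑ i, ∑ k, if i < k then h k i else 0 := by
        congr 1
        exact Finset.sum_comm
    _ = ∑ i, ∑ k, if i < k then h i k + h k i else 0 := by
        simp_rw [← Finset.sum_add_distrib, ite_add_ite, add_zero]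

/-- A quadratic form `Φ` on `n × m` real matrices vanishes on all rank-one matrices
`x yᵀ` if and only if it is a linear combination of `2 × 2` minors
`Z i j * Z k l - Z i l * Z k j` (for `i < k`, `j < l`). -/
theorem vanishes_on_rankOne_iff_lin_comb_of_minors
    (n m : ℕ) (Φ : Matrix (Fin n) (Fin m) ℝ → ℝ)
    (hq : IsMatQuadraticForm n m Φ) :
    (∀ (x : Fin n → ℝ) (y : Fin m → ℝ), Φ (vecMulVec x y) = 0) ↔
    ∃ c : Fin n → Fin n → Fin m → Fin m → ℝ,
      ∀ Z : Matrix (Fin n) (Fin m) ℝ,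
        Φ Z = ∑ i, ∑ k, ∑ j, ∑ l,
          if i < k ∧ j < l then c i k j l * (Z i j * Z k l - Z i l * Z k j) else 0 := by
  obtain ⟨C, hsym, hΦ⟩ := hq
  constructor
  · intro hv
    -- the coefficient tensor of the quadratic form
    set d : Fin n → Fin m → Fin n → Fin m → ℝ :=
      fun i j k l => matInner (Matrix.single i j 1) (C (Matrix.single k l 1)) with hdDef
    have hdapp : ∀ (a : Fin n) (b : Fin m) k l, d a b k l = (C (Matrix.single k l 1)) a b := by
      intro a b k l
      simp only [hdDef]
      exact matInner_std a b _
    -- expansion of C Z in the standard basis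
    have hrep : ∀ Z : Matrix (Fin n) (Fin m) ℝ,
        C Z = ∑ k, ∑ l, Z k l • C (Matrix.single k l 1) := by
      intro Z
      conv_lhs => rw [matrix_eq_sum_single Z]
      rw [map_sum]
      refine Finset.sum_congr rfl fun k _ => ?_
      rw [map_sum]
      refine Finset.sum_congr rfl fun l _ => ?_
      rw [← _root_.map_smul]
      congr 1
      simp
    have hCapp : ∀ (Z : Matrix (Fin n) (Fin m) ℝ) a b,
        (C Z) a b = ∑ k, ∑ l, Z k l * d a b k l := by
      intro Z a b
      rw [hrep]
      simp [Matrix.sum_apply, hdapp]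
    -- expansion of Φ
    have hexp : ∀ Z : Matrix (Fin n) (Fin m) ℝ,
        Φ Z = ∑ i, ∑ j, ∑ k, ∑ l, Z i j * Z k l * d i j k l := by
      intro Z
      rw [hΦ, matInner_eq]
      refine Finset.sum_congr rfl fun i _ => Finset.sum_congr rfl fun j _ => ?_
      rw [hCapp, Finset.mul_sum]
      refine Finset.sum_congr rfl fun k _ => ?_
      rw [Finset.mul_sum]
      refine Finset.sum_congr rfl fun l _ => ?_
      ring
    have hexp' : ∀ Z : Matrix (Fin n) (Fin m) ℝ,
        Φ Z = ∑ i, ∑ k, ∑ j, ∑ l, Z i j * Z k l * d i j k l := by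
      intro Z
      rw [hexp]
      exact Finset.sum_congr rfl fun i _ => Finset.sum_comm
    -- the symmetric bilinear form on rank-one matrices
    set B : (Fin n → ℝ) → (Fin m → ℝ) → (Fin n → ℝ) → (Fin m → ℝ) → ℝ :=
      fun x y z w => matInner (vecMulVec x y) (C (vecMulVec z w)) with hBDef
    have hB0 : ∀ x y, B x y x y = 0 := by
      intro x y
      have h := hv x y
      rw [hΦ] at h
      simpa only [hBDef] using h
    have hBsym : ∀ x y z w, B x y z w = B z w x y := by
      intro x y z w
      simp only [hBDef]
      rw [hsym, matInner_comm]
    have hBadd1 : ∀ x x' y z w, B (x + x') y z w = B x y z w + B x' y z w := by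
      intro x x' y z w
      simp only [hBDef, add_vecMulVec', matInner_add_left]
    have hBadd2 : ∀ x y y' z w, B x (y + y') z w = B x y z w + B x y' z w := by
      intro x y y' z w
      simp only [hBDef, vecMulVec_add', matInner_add_left]
    have hBadd3 : ∀ x y z z' w, B x y (z + z') w = B x y z w + B x y z' w := by
      intro x y z z' w
      simp only [hBDef, add_vecMulVec', map_add, matInner_add_right]
    have hBadd4 : ∀ x y z w w', B x y z (w + w') = B x y z w + B x y z w' := by
      intro x y z w w'
      simp only [hBDef, vecMulVec_add', map_add, matInner_add_right]
    -- polarization identities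
    have hE1 : ∀ x y y', B x y x y' = 0 := by
      intro x y y'
      have h := hB0 x (y + y')
      rw [hBadd2, hBadd4, hBadd4] at h
      have hs := hBsym x y' x y
      have h1 := hB0 x y
      have h2 := hB0 x y'
      linarith
    have hE2 : ∀ x y z, B x y z y = 0 := by
      intro x y z
      have h := hB0 (x + z) y
      rw [hBadd1, hBadd3, hBadd3] at h
      have hs := hBsym z y x y
      have h1 := hB0 x y
      have h2 := hB0 z y
      linarith
    have hE3 : ∀ x y z w, B x y z w + B z y x w = 0 := by
      intro x y z w
      have h := hE1 (x + z) y w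
      rw [hBadd1, hBadd3, hBadd3] at h
      have h1 := hE1 x y w
      have h2 := hE1 z y w
      linarith
    -- evaluation of B on standard basis vectors
    have hBsingle : ∀ (i : Fin n) (j : Fin m) (k : Fin n) (l : Fin m),
        B (Pi.single i 1) (Pi.single j 1) (Pi.single k 1) (Pi.single l 1) = d i j k l := by
      intro i j k l
      simp only [hBDef, vecMulVec_single, hdDef]
    -- the key relations on d
    have hd_row : ∀ (i : Fin n) (j l : Fin m), d i j i l = 0 := by
      intro i j l
      rw [← hBsingle]
      exact hE1 _ _ _
    have hd_col : ∀ (i : Fin n) (j : Fin m) (k : Fin n), d i j k j = 0 := by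
      intro i j k
      rw [← hBsingle]
      exact hE2 _ _ _
    have hd_anti : ∀ (i : Fin n) (j : Fin m) (k : Fin n) (l : Fin m),
        d i j k l + d k j i l = 0 := by
      intro i j k l
      rw [← hBsingle, ← hBsingle]
      exact hE3 _ _ _ _
    have hd_sym : ∀ (i : Fin n) (j : Fin m) (k : Fin n) (l : Fin m),
        d i j k l = d k l i j := by
      intro i j k l
      simp only [hdDef]
      rw [hsym, matInner_comm]
    -- conclusion
    refine ⟨fun i k j l => 2 * d i j k l, fun Z => ?_⟩
    have h0out : ∀ i, (∑ j, ∑ l, Z i j * Z i l * d i j i l) = 0 := by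
      intro i; simp [hd_row]
    rw [hexp' Z, sum_split (fun i k => ∑ j, ∑ l, Z i j * Z k l * d i j k l) h0out]
    refine Finset.sum_congr rfl fun i _ => Finset.sum_congr rfl fun k _ => ?_
    by_cases hik : i < k
    · simp only [hik, if_true, true_and]
      rw [← Finset.sum_add_distrib]
      simp_rw [← Finset.sum_add_distrib]
      have hdiag : ∀ j, Z i j * Z k j * d i j k j + Z k j * Z i j * d k j i j = 0 := by
        intro j; simp [hd_col]
      rw [sum_split (fun j l => Z i j * Z k l * d i j k l + Z k j * Z i l * d k j i l) hdiag]
      refine Finset.sum_congr rfl fun j _ => Finset.sum_congr rfl fun l _ => ?_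
      by_cases hjl : j < l
      · simp only [hjl, if_true]
        have e1 : d k j i l = - d i j k l := by linarith [hd_anti i j k l]
        have e2 : d k l i j = d i j k l := (hd_sym k l i j)
        have e3 : d i l k j = - d i j k l := by
          have h := hd_anti i l k j
          rw [e2] at h
          linarith
        rw [e1, e2, e3]
        ring
      · simp [hjl]
    · simp [hik]
  · rintro ⟨c, hc⟩ x y
    rw [hc]
    refine Finset.sum_eq_zero fun i _ => Finset.sum_eq_zero fun k _ =>
      Finset.sum_eq_zero fun j _ => Finset.sum_eq_zero fun l _ => ?_
    split_ifs with h
    · simp only [vecMulVec_apply]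
      ring
    · rfl
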